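/- Let μ be a finitely additive probability measure on the power set of X and λ a finitely additive probability measure on the power set of Y, and let μ × λ denote the induced finitely additive measure on the Boolean algebra of X × Y generated by rectangles. Suppose D ⊆ X × Y is such that for every ε > 0 there exist sets D⁻ and D⁺, each a finite union of rectangles, with D⁻ ⊆ D ⊆ D⁺ and (μ × λ)(D⁺) − (μ × λ)(D⁻) ≤ ε. Then there is exactly one value r such that every finitely additive probability measure ω on the Boolean algebra generated by rectangles together with D, which agrees with μ × λ on rectangles, satisfies ω(D) = r; namely r = inf over ε of (μ × λ)(D⁺_ε) = sup over ε of (μ × λ)(D⁻_ε). -/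

import Mathlib

/-- A finitely additive probability measure defined on the full power set. -/
def IsFAP {X : Type*} (m : Set X → ℝ) : Prop :=
  m Set.univ = 1 ∧ (∀ A, 0 ≤ m A) ∧
    ∀ A C : Set X, Disjoint A C → m (A ∪ C) = m A + m C

/-- A finite union of rectangles. -/
def IsRectUnion {X Y : Type*} (P : Set (X × Y)) : Prop :=
  ∃ (n : ℕ) (A : Fin n → Set X) (B : Fin n → Set Y), P = ⋃ i, A i ×ˢ B i

section FAP
variable {X : Type*} {m : Set X → ℝ}

lemma IsFAP.empty (hm : IsFAP m) : m ∅ = 0 := by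
  have h := hm.2.2 ∅ ∅ (by simp)
  simp at h
  linarith

lemma IsFAP.diff (hm : IsFAP m) {A B : Set X} (h : A ⊆ B) :
    m B = m A + m (B \ A) := by
  have h2 := hm.2.2 A (B \ A) Set.disjoint_sdiff_right
  rwa [Set.union_diff_cancel h] at h2

lemma IsFAP.mono (hm : IsFAP m) {A B : Set X} (h : A ⊆ B) : m A ≤ m B := by
  have := hm.diff h
  have := hm.2.1 (B \ A)
  linarith

lemma IsFAP.le_one (hm : IsFAP m) (A : Set X) : m A ≤ 1 := by
  have := hm.mono (Set.subset_univ A)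
  rw [hm.1] at this
  exact this

lemma IsFAP.modular (hm : IsFAP m) (A B : Set X) :
    m (A ∪ B) + m (A ∩ B) = m A + m B := by
  have h1 : m (A ∪ B) = m A + m ((A ∪ B) \ A) := hm.diff Set.subset_union_left
  have h2 : m B = m (A ∩ B) + m (B \ (A ∩ B)) := hm.diff Set.inter_subset_right
  have e1 : (A ∪ B) \ A = B \ (A ∩ B) := by
    ext x
    simp only [Set.mem_diff, Set.mem_union, Set.mem_inter_iff]
    tauto
  rw [e1] at h1
  linarith

lemma IsFAP.sum_parts (hm : IsFAP m) {ι : Type*} [DecidableEq ι] (s : Finset ι)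
    (A : ι → Set X) (hd : ∀ i ∈ s, ∀ j ∈ s, i ≠ j → Disjoint (A i) (A j)) :
    m (⋃ i ∈ s, A i) = ∑ i ∈ s, m (A i) := by
  induction s using Finset.induction_on with
  | empty => simp [hm.empty]
  | @insert a s ha ih =>
    rw [Finset.set_biUnion_insert, Finset.sum_insert ha]
    rw [hm.2.2 _ _ ?_, ih ?_]
    · intro i hi j hj hij
      exact hd i (Finset.mem_insert_of_mem hi) j (Finset.mem_insert_of_mem hj) hij
    · rw [Set.disjoint_iUnion_right]
      intro i
      rw [Set.disjoint_iUnion_right]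
      intro hi
      exact hd a (Finset.mem_insert_self a s) i (Finset.mem_insert_of_mem hi)
        (by rintro rfl; exact ha hi)

end FAP

section Ssum
variable {X : Type*} {m : Set X → ℝ}

/-- Discrete "integral" of an ℕ-valued function. -/
noncomputable def Ssum (m : Set X → ℝ) (c : ℕ) (N : X → ℕ) : ℝ :=
  ∑ k ∈ Finset.range c, m {x | k + 1 ≤ N x}

lemma Ssum_pad (hm : IsFAP m) {c c' : ℕ} (N : X → ℕ) (hN : ∀ x, N x ≤ c)
    (hcc : c ≤ c') : Ssum m c' N = Ssum m c N := by
  unfold Ssum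
  rw [← Finset.sum_subset (Finset.range_subset_range.2 hcc)]
  intro k _ hk
  simp only [Finset.mem_range, not_lt] at hk
  have : {x | k + 1 ≤ N x} = (∅ : Set X) := by
    ext x; simp only [Set.mem_setOf_eq, Set.mem_empty_iff_false, iff_false, not_le]
    exact lt_of_le_of_lt (hN x) (Nat.lt_succ_of_le hk)
  rw [this, hm.empty]

lemma Ssum_mono (hm : IsFAP m) {c : ℕ} {N M : X → ℕ} (h : ∀ x, N x ≤ M x) :
    Ssum m c N ≤ Ssum m c M := by
  apply Finset.sum_le_sum
  intro k _
  exact hm.mono (fun x hx => le_trans hx (h x))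

lemma Ssum_step (hm : IsFAP m) {c : ℕ} (N : X → ℕ) (E : Set X)
    [DecidablePred (· ∈ E)] (hN : ∀ x, N x ≤ c) :
    Ssum m (c + 1) (fun x => N x + (if x ∈ E then 1 else 0)) = Ssum m c N + m E := by
  have key : ∀ k : ℕ, m {x | k + 1 ≤ N x + (if x ∈ E then 1 else 0)}
      = m {x | k + 1 ≤ N x} + m ({x | N x = k} ∩ E) := by
    intro k
    have hset : {x | k + 1 ≤ N x + (if x ∈ E then 1 else 0)}
        = {x | k + 1 ≤ N x} ∪ ({x | N x = k} ∩ E) := by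
      ext x
      by_cases hx : x ∈ E <;> simp [hx] <;> omega
    rw [hset, hm.2.2]
    rw [Set.disjoint_left]
    rintro x hx ⟨hx2, _⟩
    simp only [Set.mem_setOf_eq] at hx hx2
    omega
  unfold Ssum
  calc ∑ k ∈ Finset.range (c+1), m {x | k + 1 ≤ N x + (if x ∈ E then 1 else 0)}
      = ∑ k ∈ Finset.range (c+1), (m {x | k + 1 ≤ N x} + m ({x | N x = k} ∩ E)) := by
        exact Finset.sum_congr rfl (fun k _ => key k)
    _ = ∑ k ∈ Finset.range (c+1), m {x | k + 1 ≤ N x}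
        + ∑ k ∈ Finset.range (c+1), m ({x | N x = k} ∩ E) := Finset.sum_add_distrib
    _ = ∑ k ∈ Finset.range c, m {x | k + 1 ≤ N x} + m E := by
        congr 1
        · exact Ssum_pad hm N hN (Nat.le_succ c)
        · rw [← hm.sum_parts (Finset.range (c+1)) (fun k => {x | N x = k} ∩ E) ?_]
          · congr 1
            ext x
            simp only [Set.mem_iUnion, Finset.mem_range, Set.mem_inter_iff,
              Set.mem_setOf_eq]
            constructor
            · rintro ⟨k, _, _, hx⟩; exact hx
            · intro hx; exact ⟨N x, Nat.lt_succ_of_le (hN x), rfl, hx⟩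
          · intro i _ j _ hij
            rw [Set.disjoint_left]
            rintro x ⟨h1, _⟩ ⟨h2, _⟩
            exact hij (h1 ▸ h2 ▸ rfl)

lemma Ssum_add (hm : IsFAP m) (a : ℕ) (N : X → ℕ) (hN : ∀ x, N x ≤ a) :
    ∀ (b : ℕ) (M : X → ℕ), (∀ x, M x ≤ b) →
      Ssum m (a + b) (fun x => N x + M x) = Ssum m a N + Ssum m b M := by
  intro b
  induction b with
  | zero =>
    intro M hM
    have : M = fun _ => 0 := funext fun x => Nat.le_zero.1 (hM x)
    subst this
    simp [Ssum]
  | succ b ih =>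
    intro M hM
    classical
    set E : Set X := {x | b + 1 ≤ M x} with hE
    set M' : X → ℕ := fun x => min (M x) b with hM'
    have hM'x : ∀ x, M' x = min (M x) b := fun x => rfl
    have hEx : ∀ x, x ∈ E ↔ b + 1 ≤ M x := by intro x; rw [hE]; simp
    have hM'b : ∀ x, M' x ≤ b := by intro x; rw [hM'x]; exact min_le_right _ _
    have hNM' : ∀ x, N x + M' x ≤ a + b := fun x => Nat.add_le_add (hN x) (hM'b x)
    have e1 : (fun x => N x + M x) = fun x => (N x + M' x) + (if x ∈ E then 1 else 0) := by
      funext x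
      have hMx := hM x
      by_cases hx : x ∈ E
      · rw [if_pos hx]
        have hb : b + 1 ≤ M x := (hEx x).1 hx
        have h1 : M' x = b := by rw [hM'x]; exact min_eq_right (by omega)
        omega
      · rw [if_neg hx]
        have hb : ¬ (b + 1 ≤ M x) := fun h => hx ((hEx x).2 h)
        have h1 : M' x = M x := by rw [hM'x]; exact min_eq_left (by omega)
        omega
    have e2 : (fun x => M x) = fun x => M' x + (if x ∈ E then 1 else 0) := by
      funext x
      have := congrFun e1 x
      omega
    calc Ssum m (a + (b + 1)) (fun x => N x + M x)
        = Ssum m ((a + b) + 1) (fun x => (N x + M' x) + (if x ∈ E then 1 else 0)) := by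
          rw [← e1]; ring_nf
      _ = Ssum m (a + b) (fun x => N x + M' x) + m E := Ssum_step hm _ E hNM'
      _ = Ssum m a N + Ssum m b M' + m E := by rw [ih M' hM'b]
      _ = Ssum m a N + (Ssum m b M' + m E) := by ring
      _ = Ssum m a N + Ssum m (b + 1) (fun x => M' x + (if x ∈ E then 1 else 0)) := by
          rw [Ssum_step hm M' E hM'b]
      _ = Ssum m a N + Ssum m (b + 1) M := by rw [← e2]

end Ssum

section Nfun
variable {X : Type*}

/-- Discretization of a `[0,1]`-valued function at scale `1/n`. -/
noncomputable def Nfun (n : ℕ) (f : X → ℝ) (x : X) : ℕ := ⌈(n : ℝ) * f x⌉₊ - 1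

lemma Nfun_char {n : ℕ} (hn : 0 < n) (f : X → ℝ) (x : X) {k : ℕ} (hk : 1 ≤ k) :
    k ≤ Nfun n f x ↔ (k : ℝ) / n < f x := by
  unfold Nfun
  have h1 : k ≤ ⌈(n : ℝ) * f x⌉₊ - 1 ↔ k + 1 ≤ ⌈(n : ℝ) * f x⌉₊ := by omega
  rw [h1, Nat.succ_le_iff, Nat.lt_ceil, div_lt_iff₀ (by positivity)]
  rw [mul_comm]

lemma Nfun_le {n : ℕ} (hn : 0 < n) {f : X → ℝ} {x : X} (hf : f x ≤ 1) :
    Nfun n f x ≤ n := by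
  unfold Nfun
  have : ⌈(n : ℝ) * f x⌉₊ ≤ n := by
    rw [Nat.ceil_le]
    calc (n : ℝ) * f x ≤ (n : ℝ) * 1 := by
          apply mul_le_mul_of_nonneg_left hf (by positivity)
      _ = (n : ℝ) := by ring
  omega

lemma Nfun_add_lower {n : ℕ} (hn : 0 < n) {f g : X → ℝ} (hf : ∀ x, 0 ≤ f x)
    (hg : ∀ x, 0 ≤ g x) (x : X) :
    Nfun n f x + Nfun n g x ≤ Nfun n (fun x => f x + g x) x := by
  set a := Nfun n f x with hA
  set b := Nfun n g x with hB
  rcases Nat.eq_zero_or_pos (a + b) with h | h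
  · omega
  rw [Nfun_char hn _ x h]
  have hfx : (a : ℝ) / n ≤ f x := by
    rcases Nat.eq_zero_or_pos a with ha | ha
    · rw [ha]; simpa using hf x
    · exact le_of_lt ((Nfun_char hn f x ha).1 (le_refl a))
  have hgx : (b : ℝ) / n ≤ g x := by
    rcases Nat.eq_zero_or_pos b with hb | hb
    · rw [hb]; simpa using hg x
    · exact le_of_lt ((Nfun_char hn g x hb).1 (le_refl b))
  -- at least one of a, b is positive, so one inequality is strict
  rcases Nat.eq_zero_or_pos a with ha | ha
  · have hb : 0 < b := by omega
    have : (b : ℝ) / n < g x := (Nfun_char hn g x hb).1 (le_refl b)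
    have : ((a + b : ℕ) : ℝ) / n = (a : ℝ) / n + (b : ℝ) / n := by
      push_cast; ring
    rw [this]
    have := (Nfun_char hn g x hb).1 (le_refl b)
    linarith
  · have : (a : ℝ) / n < f x := (Nfun_char hn f x ha).1 (le_refl a)
    have hcast : ((a + b : ℕ) : ℝ) / n = (a : ℝ) / n + (b : ℝ) / n := by
      push_cast; ring
    rw [hcast]
    linarith

lemma Nfun_add_upper {n : ℕ} (hn : 0 < n) (f g : X → ℝ) (x : X) :
    Nfun n (fun x => f x + g x) x ≤ Nfun n f x + Nfun n g x + 1 := by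
  set a := Nfun n f x with hA
  set b := Nfun n g x with hB
  by_contra hcon
  push_neg at hcon
  have h2 : a + b + 2 ≤ Nfun n (fun x => f x + g x) x := hcon
  have h3 : ((a + b + 2 : ℕ) : ℝ) / n < f x + g x :=
    (Nfun_char hn _ x (by omega)).1 h2
  have hfx : f x ≤ ((a + 1 : ℕ) : ℝ) / n := by
    by_contra hf
    push_neg at hf
    have := (Nfun_char hn f x (by omega)).2 hf
    omega
  have hgx : g x ≤ ((b + 1 : ℕ) : ℝ) / n := by
    by_contra hg
    push_neg at hg
    have := (Nfun_char hn g x (by omega)).2 hg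
    omega
  have hcast : ((a + b + 2 : ℕ) : ℝ) / n = ((a + 1 : ℕ) : ℝ) / n + ((b + 1 : ℕ) : ℝ) / n := by
    push_cast; ring
  rw [hcast] at h3
  linarith

end Nfun

section Iint
variable {X : Type*} {m : Set X → ℝ}

/-- Distribution function. -/
noncomputable def phiF (m : Set X → ℝ) (h : X → ℝ) (t : ℝ) : ℝ := m {x | t < h x}

/-- The Choquet-type integral of a function against a finitely additive measure. -/
noncomputable def Iint (m : Set X → ℝ) (h : X → ℝ) : ℝ := ∫ t in (0:ℝ)..1, phiF m h t

lemma phiF_anti (hm : IsFAP m) (h : X → ℝ) : Antitone (phiF m h) := by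
  intro s t hst
  exact hm.mono (fun x hx => lt_of_le_of_lt hst hx)

lemma phiF_nonneg (hm : IsFAP m) (h : X → ℝ) (t : ℝ) : 0 ≤ phiF m h t := hm.2.1 _

lemma phiF_le_one (hm : IsFAP m) (h : X → ℝ) (t : ℝ) : phiF m h t ≤ 1 := hm.le_one _

lemma phiF_integrable (hm : IsFAP m) (h : X → ℝ) (a b : ℝ) :
    IntervalIntegrable (phiF m h) MeasureTheory.volume a b :=
  (phiF_anti hm h).intervalIntegrable

/-- Riemann sum bounds for the integral of an antitone function. -/
lemma int_le_upperSum {φ : ℝ → ℝ} (hφ : Antitone φ) {n : ℕ} (hn : 0 < n) :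
    ∫ t in (0:ℝ)..1, φ t ≤ (∑ k ∈ Finset.range n, φ ((k : ℝ) / n)) / n := by
  have hnR : (0:ℝ) < n := by positivity
  set a : ℕ → ℝ := fun k => (k : ℝ) / n with ha
  have hint : ∀ k < n, IntervalIntegrable φ MeasureTheory.volume (a k) (a (k+1)) :=
    fun k _ => hφ.intervalIntegrable
  have hsplit := intervalIntegral.sum_integral_adjacent_intervals
    (μ := MeasureTheory.volume) hint
  have ha0 : a 0 = 0 := by simp [ha]
  have han : a n = 1 := by show (n:ℝ)/n = 1; exact div_self (ne_of_gt hnR)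
  rw [ha0, han] at hsplit
  rw [← hsplit]
  have hstep : ∀ k, a (k + 1) - a k = 1 / n := by
    intro k
    simp only [ha]
    push_cast
    field_simp
    ring
  have hle : ∀ k ∈ Finset.range n,
      ∫ t in (a k)..(a (k+1)), φ t ≤ φ ((k : ℝ) / n) * (1 / n) := by
    intro k _
    have hak : a k ≤ a (k + 1) := by
      have := hstep k
      have : (0:ℝ) ≤ 1 / n := by positivity
      linarith [hstep k]
    calc ∫ t in (a k)..(a (k+1)), φ t
        ≤ ∫ _t in (a k)..(a (k+1)), φ (a k) :=
          intervalIntegral.integral_mono_on hak hφ.intervalIntegrable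
            intervalIntegrable_const (fun x hx => hφ hx.1)
      _ = (a (k+1) - a k) • φ (a k) := intervalIntegral.integral_const _
      _ = φ ((k : ℝ) / n) * (1 / n) := by
          rw [hstep k, smul_eq_mul]
          ring
  calc ∑ k ∈ Finset.range n, ∫ t in (a k)..(a (k+1)), φ t
      ≤ ∑ k ∈ Finset.range n, φ ((k : ℝ) / n) * (1 / n) := Finset.sum_le_sum hle
    _ = (∑ k ∈ Finset.range n, φ ((k : ℝ) / n)) / n := by
        rw [← Finset.sum_mul]
        ring

lemma lowerSum_le_int {φ : ℝ → ℝ} (hφ : Antitone φ) {n : ℕ} (hn : 0 < n) :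
    (∑ k ∈ Finset.range n, φ (((k : ℝ) + 1) / n)) / n ≤ ∫ t in (0:ℝ)..1, φ t := by
  have hnR : (0:ℝ) < n := by positivity
  set a : ℕ → ℝ := fun k => (k : ℝ) / n with ha
  have hint : ∀ k < n, IntervalIntegrable φ MeasureTheory.volume (a k) (a (k+1)) :=
    fun k _ => hφ.intervalIntegrable
  have hsplit := intervalIntegral.sum_integral_adjacent_intervals
    (μ := MeasureTheory.volume) hint
  have ha0 : a 0 = 0 := by simp [ha]
  have han : a n = 1 := by show (n:ℝ)/n = 1; exact div_self (ne_of_gt hnR)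
  rw [ha0, han] at hsplit
  rw [← hsplit]
  have hstep : ∀ k, a (k + 1) - a k = 1 / n := by
    intro k
    simp only [ha]
    push_cast
    field_simp
    ring
  have hle : ∀ k ∈ Finset.range n,
      φ (((k : ℝ) + 1) / n) * (1 / n) ≤ ∫ t in (a k)..(a (k+1)), φ t := by
    intro k _
    have hak : a k ≤ a (k + 1) := by
      have : (0:ℝ) ≤ 1 / n := by positivity
      linarith [hstep k]
    have hcast : a (k + 1) = ((k : ℝ) + 1) / n := by
      simp only [ha]; push_cast; ring
    calc φ (((k : ℝ) + 1) / n) * (1 / n)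
        = (a (k+1) - a k) • φ (a (k+1)) := by
          rw [hstep k, smul_eq_mul, hcast]; ring
      _ = ∫ _t in (a k)..(a (k+1)), φ (a (k+1)) :=
          (intervalIntegral.integral_const _).symm
      _ ≤ ∫ t in (a k)..(a (k+1)), φ t :=
          intervalIntegral.integral_mono_on hak intervalIntegrable_const
            hφ.intervalIntegrable (fun x hx => hφ hx.2)
  calc (∑ k ∈ Finset.range n, φ (((k : ℝ) + 1) / n)) / n
      = ∑ k ∈ Finset.range n, φ (((k : ℝ) + 1) / n) * (1 / n) := by
        rw [← Finset.sum_mul]; ring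
    _ ≤ ∑ k ∈ Finset.range n, ∫ t in (a k)..(a (k+1)), φ t := Finset.sum_le_sum hle

end Iint

section IintBounds
variable {X : Type*} {m : Set X → ℝ}

lemma lowerSum_eq_Ssum (hm : IsFAP m) {n : ℕ} (hn : 0 < n) (h : X → ℝ) :
    ∑ k ∈ Finset.range n, phiF m h (((k : ℝ) + 1) / n) = Ssum m n (Nfun n h) := by
  apply Finset.sum_congr rfl
  intro k _
  unfold phiF
  congr 1
  ext x
  rw [Set.mem_setOf_eq, Set.mem_setOf_eq, Nfun_char hn h x (by omega)]
  push_cast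
  tauto

lemma Iint_ge (hm : IsFAP m) {n : ℕ} (hn : 0 < n) (h : X → ℝ) :
    Ssum m n (Nfun n h) / n ≤ Iint m h := by
  rw [← lowerSum_eq_Ssum hm hn h]
  exact lowerSum_le_int (phiF_anti hm h) hn

lemma Iint_le (hm : IsFAP m) {n : ℕ} (hn : 0 < n) (h : X → ℝ) :
    Iint m h ≤ (Ssum m n (Nfun n h) + 1) / n := by
  have hnR : (0:ℝ) < n := by positivity
  have h1 : Iint m h ≤ (∑ k ∈ Finset.range n, phiF m h ((k : ℝ) / n)) / n :=
    int_le_upperSum (phiF_anti hm h) hn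
  have h2 : ∑ k ∈ Finset.range n, phiF m h ((k : ℝ) / n)
      ≤ (∑ k ∈ Finset.range n, phiF m h (((k : ℝ) + 1) / n)) + 1 := by
    have e1 : ∑ k ∈ Finset.range (n + 1), phiF m h ((k : ℝ) / n)
        = ∑ k ∈ Finset.range n, phiF m h ((k : ℝ) / n) + phiF m h ((n : ℝ) / n) := by
      rw [Finset.sum_range_succ]
    have e2 : ∑ k ∈ Finset.range (n + 1), phiF m h ((k : ℝ) / n)
        = (∑ k ∈ Finset.range n, phiF m h (((k : ℝ) + 1) / n)) + phiF m h ((0 : ℝ) / n) := by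
      rw [Finset.sum_range_succ']
      congr 1
      · apply Finset.sum_congr rfl
        intro k _
        congr 2
        push_cast
        ring
      · norm_num
    have h3 : phiF m h ((0 : ℝ) / n) ≤ 1 := phiF_le_one hm h _
    have h4 : 0 ≤ phiF m h ((n : ℝ) / n) := phiF_nonneg hm h _
    linarith
  calc Iint m h ≤ (∑ k ∈ Finset.range n, phiF m h ((k : ℝ) / n)) / n := h1
    _ ≤ ((∑ k ∈ Finset.range n, phiF m h (((k : ℝ) + 1) / n)) + 1) / n := by gcongr
    _ = (Ssum m n (Nfun n h) + 1) / n := by rw [lowerSum_eq_Ssum hm hn h]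

lemma Iint_add (hm : IsFAP m) (f g : X → ℝ) (hf0 : ∀ x, 0 ≤ f x) (hg0 : ∀ x, 0 ≤ g x)
    (hfg1 : ∀ x, f x + g x ≤ 1) :
    Iint m (fun x => f x + g x) = Iint m f + Iint m g := by
  classical
  have hf1 : ∀ x, f x ≤ 1 := fun x => by have := hfg1 x; have := hg0 x; linarith
  have hg1 : ∀ x, g x ≤ 1 := fun x => by have := hfg1 x; have := hf0 x; linarith
  have key : ∀ n : ℕ, 0 < n →
      |Iint m (fun x => f x + g x) - (Iint m f + Iint m g)| ≤ 4 / n := by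
    intro n hn
    have hnR : (0:ℝ) < n := by positivity
    set Sf := Ssum m n (Nfun n f) with hSf
    set Sg := Ssum m n (Nfun n g) with hSg
    set Sfg := Ssum m n (Nfun n (fun x => f x + g x)) with hSfg
    have hNf : ∀ x, Nfun n f x ≤ n := fun x => Nfun_le hn (hf1 x)
    have hNg : ∀ x, Nfun n g x ≤ n := fun x => Nfun_le hn (hg1 x)
    have hNfg : ∀ x, Nfun n (fun x => f x + g x) x ≤ n := fun x => Nfun_le hn (hfg1 x)
    have hlow : Sf + Sg ≤ Sfg := by
      have h1 : Ssum m (n + n) (fun x => Nfun n f x + Nfun n g x) = Sf + Sg :=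
        Ssum_add hm n _ hNf n _ hNg
      have h2 : Ssum m (n + n) (fun x => Nfun n f x + Nfun n g x)
          ≤ Ssum m (n + n) (Nfun n (fun x => f x + g x)) :=
        Ssum_mono hm (Nfun_add_lower hn hf0 hg0)
      have h3 : Ssum m (n + n) (Nfun n (fun x => f x + g x)) = Sfg :=
        Ssum_pad hm _ hNfg (by omega)
      linarith
    have hup : Sfg ≤ Sf + Sg + 1 := by
      have h1 : Ssum m (n + n + 1) (Nfun n (fun x => f x + g x)) = Sfg :=
        Ssum_pad hm _ hNfg (by omega)
      have h2 : Ssum m (n + n + 1) (Nfun n (fun x => f x + g x))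
          ≤ Ssum m (n + n + 1)
            (fun x => (Nfun n f x + Nfun n g x) + (if x ∈ (Set.univ : Set X) then 1 else 0)) := by
        apply Ssum_mono hm
        intro x
        have := Nfun_add_upper hn f g x
        simp only [Set.mem_univ, if_true]
        omega
      have h3 : Ssum m (n + n + 1)
            (fun x => (Nfun n f x + Nfun n g x) + (if x ∈ (Set.univ : Set X) then 1 else 0))
          = Ssum m (n + n) (fun x => Nfun n f x + Nfun n g x) + m Set.univ :=
        Ssum_step hm _ _ (fun x => add_le_add (hNf x) (hNg x))
      have h4 : Ssum m (n + n) (fun x => Nfun n f x + Nfun n g x) = Sf + Sg :=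
        Ssum_add hm n _ hNf n _ hNg
      rw [hm.1] at h3
      linarith
    have bf_lo : Sf / n ≤ Iint m f := Iint_ge hm hn f
    have bf_hi : Iint m f ≤ (Sf + 1) / n := Iint_le hm hn f
    have bg_lo : Sg / n ≤ Iint m g := Iint_ge hm hn g
    have bg_hi : Iint m g ≤ (Sg + 1) / n := Iint_le hm hn g
    have bfg_lo : Sfg / n ≤ Iint m (fun x => f x + g x) := Iint_ge hm hn _
    have bfg_hi : Iint m (fun x => f x + g x) ≤ (Sfg + 1) / n := Iint_le hm hn _
    have e1 : (Sf + 1) / n = Sf / n + 1 / n := by ring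
    have e2 : (Sg + 1) / n = Sg / n + 1 / n := by ring
    have e3 : (Sfg + 1) / n = Sfg / n + 1 / n := by ring
    have hlow' : Sf / n + Sg / n ≤ Sfg / n := by
      rw [← add_div]
      gcongr
    have hup' : Sfg / n ≤ Sf / n + Sg / n + 1 / n := by
      rw [← add_div, ← add_div]
      gcongr
    have hfour : (4:ℝ) / n = 1 / n + 1 / n + 1 / n + 1 / n := by ring
    rw [abs_le]
    constructor <;> [skip; skip] <;> linarith
  apply eq_of_forall_dist_le
  intro ε hε
  obtain ⟨n, hngt⟩ := exists_nat_gt (4 / ε)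
  have hn0 : 0 < n := by
    by_contra hc
    push_neg at hc
    interval_cases n
    simp at hngt
    have : 0 < 4 / ε := by positivity
    linarith
  have h1 := key n hn0
  have hnR : (0:ℝ) < n := by positivity
  have h2 : 4 / (n:ℝ) ≤ ε := by
    rw [div_le_iff₀ hnR]
    rw [div_lt_iff₀ hε] at hngt
    nlinarith
  rw [Real.dist_eq]
  linarith

end IintBounds

section ProdFA
variable {X Y : Type*}

/-- The product finitely additive measure, defined on all subsets of `X × Y`. -/
noncomputable def prodFA (μ : Set X → ℝ) (l : Set Y → ℝ) : Set (X × Y) → ℝ :=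
  fun S => Iint μ (fun x => l {y | (x, y) ∈ S})

lemma prodFA_rect {μ : Set X → ℝ} {l : Set Y → ℝ} (hμ : IsFAP μ) (hl : IsFAP l)
    (A : Set X) (B : Set Y) : prodFA μ l (A ×ˢ B) = μ A * l B := by
  classical
  set c := l B with hc
  have hc0 : 0 ≤ c := hl.2.1 B
  have hc1 : c ≤ 1 := hl.le_one B
  have hsec : ∀ x, l {y | (x, y) ∈ A ×ˢ B} = if x ∈ A then c else 0 := by
    intro x
    by_cases hx : x ∈ A
    · rw [if_pos hx]
      congr 1
      ext y
      simp [hx]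
    · rw [if_neg hx]
      have : {y | (x, y) ∈ A ×ˢ B} = (∅ : Set Y) := by
        ext y; simp [hx]
      rw [this, hl.empty]
  have hphi : Set.EqOn (phiF μ (fun x => l {y | (x, y) ∈ A ×ˢ B}))
      (fun t => if t < c then μ A else 0) (Set.uIcc 0 1) := by
    intro t ht
    rw [Set.uIcc_of_le (by norm_num : (0:ℝ) ≤ 1)] at ht
    have ht0 : 0 ≤ t := ht.1
    unfold phiF
    dsimp only
    by_cases htc : t < c
    · rw [if_pos htc]
      congr 1
      ext x
      rw [Set.mem_setOf_eq, hsec x]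
      by_cases hx : x ∈ A <;> simp [hx, htc]
      linarith
    · rw [if_neg htc]
      have : {x | t < l {y | (x, y) ∈ A ×ˢ B}} = (∅ : Set X) := by
        ext x
        rw [Set.mem_setOf_eq, hsec x]
        by_cases hx : x ∈ A <;> simp [hx]
        · exact le_of_not_gt htc
        · linarith
      rw [this, hμ.empty]
  have h1 : prodFA μ l (A ×ˢ B) = ∫ t in (0:ℝ)..1, (if t < c then μ A else 0) :=
    intervalIntegral.integral_congr hphi
  rw [h1]
  -- now compute the integral of the step function
  have hanti : Antitone (fun t : ℝ => if t < c then μ A else 0) := by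
    intro s t hst
    dsimp only
    by_cases h2 : t < c
    · rw [if_pos h2, if_pos (lt_of_le_of_lt hst h2)]
    · rw [if_neg h2]
      by_cases h3 : s < c
      · rw [if_pos h3]; exact hμ.2.1 A
      · rw [if_neg h3]
  have hsplit : ∫ t in (0:ℝ)..1, (if t < c then μ A else 0)
      = (∫ t in (0:ℝ)..c, (if t < c then μ A else 0))
        + ∫ t in c..1, (if t < c then μ A else 0) :=
    (intervalIntegral.integral_add_adjacent_intervals
      hanti.intervalIntegrable hanti.intervalIntegrable).symm
  have hpart2 : (∫ t in c..1, (if t < c then μ A else 0)) = 0 := by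
    have : Set.EqOn (fun t : ℝ => if t < c then μ A else 0) (fun _ => (0:ℝ))
        (Set.uIcc c 1) := by
      intro t ht
      rw [Set.uIcc_of_le hc1] at ht
      simp only
      rw [if_neg (not_lt.2 ht.1)]
    rw [intervalIntegral.integral_congr this]
    simp
  have hpart1 : (∫ t in (0:ℝ)..c, (if t < c then μ A else 0)) = c * μ A := by
    have hae : ∀ᵐ t ∂(MeasureTheory.volume), t ∈ Set.uIoc (0:ℝ) c →
        (if t < c then μ A else 0) = μ A := by
      rw [MeasureTheory.ae_iff]
      refine MeasureTheory.measure_mono_null ?_ (MeasureTheory.measure_singleton c)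
      · intro t ht
        simp only [Set.mem_setOf_eq, not_forall] at ht
        obtain ⟨ht1, ht2⟩ := ht
        rw [Set.uIoc_of_le hc0] at ht1
        by_cases htc : t < c
        · exact absurd (if_pos htc) ht2
        · have : t = c := le_antisymm ht1.2 (not_lt.1 htc)
          exact this ▸ rfl
    calc (∫ t in (0:ℝ)..c, (if t < c then μ A else 0))
        = ∫ _t in (0:ℝ)..c, μ A := intervalIntegral.integral_congr_ae hae
      _ = (c - 0) • μ A := intervalIntegral.integral_const _
      _ = c * μ A := by rw [smul_eq_mul]; ring
  rw [hsplit, hpart1, hpart2]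
  ring

lemma prodFA_isFAP {μ : Set X → ℝ} {l : Set Y → ℝ} (hμ : IsFAP μ) (hl : IsFAP l) :
    IsFAP (prodFA μ l) := by
  refine ⟨?_, ?_, ?_⟩
  · rw [← Set.univ_prod_univ, prodFA_rect hμ hl, hμ.1, hl.1]
    ring
  · intro S
    apply intervalIntegral.integral_nonneg (by norm_num : (0:ℝ) ≤ 1)
    intro u _
    exact phiF_nonneg hμ _ u
  · intro S T hST
    have hsec : ∀ x, {y | (x, y) ∈ S ∪ T} = {y | (x, y) ∈ S} ∪ {y | (x, y) ∈ T} := by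
      intro x; ext y; simp
    have hdisj : ∀ x, Disjoint {y | (x, y) ∈ S} {y | (x, y) ∈ T} := by
      intro x
      rw [Set.disjoint_left]
      intro y hyS hyT
      exact Set.disjoint_left.1 hST hyS hyT
    have hfun : (fun x => l {y | (x, y) ∈ S ∪ T})
        = fun x => l {y | (x, y) ∈ S} + l {y | (x, y) ∈ T} := by
      funext x
      rw [hsec x, hl.2.2 _ _ (hdisj x)]
    show Iint μ _ = _
    rw [hfun]
    apply Iint_add hμ
    · intro x; exact hl.2.1 _
    · intro x; exact hl.2.1 _
    · intro x
      rw [← hl.2.2 _ _ (hdisj x), ← hsec x]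
      exact hl.le_one _

end ProdFA

section Agree
variable {X Y : Type*}

lemma agree_on_rectUnions_aux {w w' : Set (X × Y) → ℝ} (hw : IsFAP w) (hw' : IsFAP w')
    (hr : ∀ (A : Set X) (B : Set Y), w (A ×ˢ B) = w' (A ×ˢ B)) :
    ∀ (n : ℕ) (A : ℕ → Set X) (B : ℕ → Set Y),
      w (⋃ i ∈ Finset.range n, A i ×ˢ B i) = w' (⋃ i ∈ Finset.range n, A i ×ˢ B i) := by
  intro n
  induction n with
  | zero =>
    intro A B
    simp [hw.empty, hw'.empty]
  | succ n ih =>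
    intro A B
    have hsplit : (⋃ i ∈ Finset.range (n+1), A i ×ˢ B i)
        = (A n ×ˢ B n) ∪ ⋃ i ∈ Finset.range n, A i ×ˢ B i := by
      rw [Finset.range_add_one, Finset.set_biUnion_insert]
    have hinter : (A n ×ˢ B n) ∩ (⋃ i ∈ Finset.range n, A i ×ˢ B i)
        = ⋃ i ∈ Finset.range n, (A n ∩ A i) ×ˢ (B n ∩ B i) := by
      rw [Set.inter_iUnion₂]
      apply Set.iUnion₂_congr
      intro i _
      exact Set.prod_inter_prod
    have hmw := hw.modular (A n ×ˢ B n) (⋃ i ∈ Finset.range n, A i ×ˢ B i)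
    have hmw' := hw'.modular (A n ×ˢ B n) (⋃ i ∈ Finset.range n, A i ×ˢ B i)
    rw [hinter] at hmw hmw'
    have h1 := ih A B
    have h2 := ih (fun i => A n ∩ A i) (fun i => B n ∩ B i)
    have h3 := hr (A n) (B n)
    rw [hsplit]
    linarith

lemma agree_on_rectUnions {w w' : Set (X × Y) → ℝ} (hw : IsFAP w) (hw' : IsFAP w')
    (hr : ∀ (A : Set X) (B : Set Y), w (A ×ˢ B) = w' (A ×ˢ B))
    {P : Set (X × Y)} (hP : IsRectUnion P) : w P = w' P := by
  classical
  obtain ⟨n, A, B, rfl⟩ := hP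
  have hconv : (⋃ i, A i ×ˢ B i)
      = ⋃ i ∈ Finset.range n, (fun j => if h : j < n then A ⟨j, h⟩ else ∅) i
          ×ˢ (fun j => if h : j < n then B ⟨j, h⟩ else ∅) i := by
    ext p
    simp only [Set.mem_iUnion, Finset.mem_range]
    constructor
    · rintro ⟨i, hp⟩
      exact ⟨i.val, i.isLt, by simp only [i.isLt, dif_pos]; simpa using hp⟩
    · rintro ⟨j, hj, hp⟩
      rw [dif_pos hj, dif_pos hj] at hp
      exact ⟨⟨j, hj⟩, hp⟩
  rw [hconv]
  exact agree_on_rectUnions_aux hw hw' hr n _ _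

end Agree

theorem stmt_2 {X Y : Type*} (μ : Set X → ℝ) (l : Set Y → ℝ)
    (hμ : IsFAP μ) (hl : IsFAP l) (D : Set (X × Y))
    (happrox : ∀ ε > (0 : ℝ), ∃ Dm Dp : Set (X × Y),
      IsRectUnion Dm ∧ IsRectUnion Dp ∧ Dm ⊆ D ∧ D ⊆ Dp ∧
      ∀ ω : Set (X × Y) → ℝ, IsFAP ω → (∀ (A : Set X) (B : Set Y), ω (A ×ˢ B) = μ A * l B) →
        ω Dp - ω Dm ≤ ε) :
    ∃! r : ℝ, ∀ ω : Set (X × Y) → ℝ, IsFAP ω →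
      (∀ (A : Set X) (B : Set Y), ω (A ×ˢ B) = μ A * l B) → ω D = r := by
  set ω₀ := prodFA μ l with hω₀def
  have hω₀ : IsFAP ω₀ := prodFA_isFAP hμ hl
  have hω₀r : ∀ (A : Set X) (B : Set Y), ω₀ (A ×ˢ B) = μ A * l B :=
    fun A B => prodFA_rect hμ hl A B
  refine ⟨ω₀ D, ?_, ?_⟩
  · intro ω hω hωr
    apply eq_of_forall_dist_le
    intro ε hε
    obtain ⟨Dm, Dp, hDmR, hDpR, hDmD, hDDp, hbound⟩ := happrox ε hε
    have hagree : ∀ (A : Set X) (B : Set Y), ω (A ×ˢ B) = ω₀ (A ×ˢ B) := by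
      intro A B; rw [hωr, hω₀r]
    have hDm : ω Dm = ω₀ Dm := agree_on_rectUnions hω hω₀ hagree hDmR
    have hDp : ω Dp = ω₀ Dp := agree_on_rectUnions hω hω₀ hagree hDpR
    have h1 : ω Dm ≤ ω D := hω.mono hDmD
    have h2 : ω D ≤ ω Dp := hω.mono hDDp
    have h3 : ω₀ Dm ≤ ω₀ D := hω₀.mono hDmD
    have h4 : ω₀ D ≤ ω₀ Dp := hω₀.mono hDDp
    have h5 : ω Dp - ω Dm ≤ ε := hbound ω hω hωr
    rw [Real.dist_eq, abs_le]
    constructor <;> linarith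
  · intro r hr
    exact (hr ω₀ hω₀ hω₀r).symm
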